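/- Let P be a probability measure on ℝ² that is absolutely continuous with respect to the Lebesgue measure λ, with density (noise function) f = dP/dλ. Let X ⊆ ℝ², V_X = {j − i : i, j ∈ X}, and let ℓ : [0,∞) → [0,∞). If P satisfies ℓ-privacy on X, i.e., P(V) ≤ e^{ℓ(‖u‖)} · P(τ_u(V)) for every measurable V ⊆ ℝ² and every u ∈ V_X, then there exists a Lebesgue-null set N ⊂ ℝ² such that for all v, v′ ∈ ℝ² \ N with v − v′ ∈ V_X, f(v) ≤ e^{ℓ(‖v − v′‖)} · f(v′). -/

import Mathlib

open MeasureTheory Real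

open Metric Filter Topology in
private lemma leb_diff (f : EuclideanSpace ℝ (Fin 2) → ℝ) (hfi : Integrable f volume) :
    ∀ᵐ x ∂(volume : Measure (EuclideanSpace ℝ (Fin 2))),
      Tendsto (fun r : ℝ => ⨍ y in closedBall x r, f y) (𝓝[>] 0) (𝓝 (f x)) := by
  filter_upwards [IsUnifLocDoublingMeasure.ae_tendsto_average (μ := volume)
    hfi.locallyIntegrable 1] with x hx
  exact hx (fun _ => x) id tendsto_id (by
    filter_upwards [self_mem_nhdsWithin] with r hr
    exact Metric.mem_closedBall_self (by simpa using le_of_lt hr))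

/-- If a noise distribution `P` on ℝ², absolutely continuous w.r.t. Lebesgue
measure with density (noise function) `f`, satisfies `ℓ`-privacy on `X`, then there is a
Lebesgue-null set `N` such that `f v ≤ exp (ℓ ‖v - v'‖) * f v'` for all `v, v' ∉ N`
with `v - v' ∈ V_X`. -/
theorem l_private_distribution_implies_noise_function_condition
    (f : EuclideanSpace ℝ (Fin 2) → ℝ) (hf_meas : Measurable f)
    (hf_nonneg : ∀ v, 0 ≤ f v)
    (P : Measure (EuclideanSpace ℝ (Fin 2)))
    (hP : P = volume.withDensity (fun v => ENNReal.ofReal (f v)))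
    [IsProbabilityMeasure P]
    (X : Set (EuclideanSpace ℝ (Fin 2)))
    (ℓ : ℝ → ℝ) (hℓ : ∀ d : ℝ, 0 ≤ d → 0 ≤ ℓ d)
    (hpriv : ∀ V : Set (EuclideanSpace ℝ (Fin 2)), MeasurableSet V →
      ∀ u ∈ {u : EuclideanSpace ℝ (Fin 2) | ∃ i ∈ X, ∃ j ∈ X, u = j - i},
        P V ≤ ENNReal.ofReal (Real.exp (ℓ ‖u‖)) * P ((fun v => v + u) '' V)) :
    ∃ N : Set (EuclideanSpace ℝ (Fin 2)), volume N = 0 ∧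
      ∀ v ∉ N, ∀ v' ∉ N,
        v - v' ∈ {u : EuclideanSpace ℝ (Fin 2) | ∃ i ∈ X, ∃ j ∈ X, u = j - i} →
          f v ≤ Real.exp (ℓ ‖v - v'‖) * f v' := by
  classical
  -- f is integrable
  have hf_int : Integrable f volume := by
    have h1 : ∫⁻ x, ENNReal.ofReal (f x) = 1 := by
      have h := measure_univ (μ := P)
      rw [hP, withDensity_apply _ MeasurableSet.univ] at h
      simpa using h
    refine ⟨hf_meas.aestronglyMeasurable, ?_⟩
    rw [HasFiniteIntegral]
    have : ∀ x, ‖f x‖ₑ = ENNReal.ofReal (f x) := fun x => by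
      rw [← Real.enorm_eq_ofReal (hf_nonneg x)]
    simp only [this, h1]
    exact ENNReal.one_lt_top
  set G : Set (EuclideanSpace ℝ (Fin 2)) :=
    {x | Filter.Tendsto (fun r : ℝ => ⨍ y in Metric.closedBall x r, f y)
      (nhdsWithin 0 (Set.Ioi 0)) (nhds (f x))} with hG
  refine ⟨Gᶜ, ?_, ?_⟩
  · have := leb_diff f hf_int
    rw [MeasureTheory.ae_iff] at this
    simpa [hG, Set.compl_setOf] using this
  · intro v hv v' hv' hmem
    simp only [Set.mem_compl_iff, not_not] at hv hv'
    obtain ⟨i, hi, j, hj, hij⟩ := hmem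
    set u : EuclideanSpace ℝ (Fin 2) := v' - v with hu
    have hu_mem : u ∈ {u : EuclideanSpace ℝ (Fin 2) | ∃ i ∈ X, ∃ j ∈ X, u = j - i} :=
      ⟨j, hj, i, hi, by rw [hu, ← neg_sub v v', hij]; abel⟩
    have hnorm : ‖v - v'‖ = ‖u‖ := by rw [hu, norm_sub_rev]
    -- P of closed balls in terms of real integrals
    have hPB : ∀ (x : EuclideanSpace ℝ (Fin 2)) (r : ℝ),
        P (Metric.closedBall x r) = ENNReal.ofReal (∫ y in Metric.closedBall x r, f y) := by
      intro x r
      rw [hP, withDensity_apply _ measurableSet_closedBall,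
        ← ofReal_integral_eq_lintegral_ofReal hf_int.integrableOn
          (Filter.Eventually.of_forall fun y => hf_nonneg y)]
    -- key inequality for integrals over balls
    have key : ∀ r : ℝ, 0 < r →
        ⨍ y in Metric.closedBall v r, f y ≤
          Real.exp (ℓ ‖u‖) * ⨍ y in Metric.closedBall v' r, f y := by
      intro r hr
      have himg : (fun x => x + u) '' Metric.closedBall v r = Metric.closedBall v' r := by
        have := (IsometryEquiv.addRight u (G := EuclideanSpace ℝ (Fin 2))).image_closedBall v r
        simpa [hu] using this
      have h1 := hpriv (Metric.closedBall v r) measurableSet_closedBall u hu_mem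
      rw [himg, hPB, hPB, ← ENNReal.ofReal_mul (Real.exp_pos _).le] at h1
      have h2 : ∫ y in Metric.closedBall v r, f y ≤
          Real.exp (ℓ ‖u‖) * ∫ y in Metric.closedBall v' r, f y := by
        have hnn : 0 ≤ Real.exp (ℓ ‖u‖) * ∫ y in Metric.closedBall v' r, f y :=
          mul_nonneg (Real.exp_pos _).le
            (setIntegral_nonneg measurableSet_closedBall fun y _ => hf_nonneg y)
        exact (ENNReal.ofReal_le_ofReal_iff hnn).mp h1
      have hvol : volume (Metric.closedBall v r) = volume (Metric.closedBall v' r) := by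
        rw [Measure.addHaar_closedBall_center volume v r,
          Measure.addHaar_closedBall_center volume v' r]
      rw [setAverage_eq, setAverage_eq, measureReal_def, measureReal_def, hvol, smul_eq_mul, smul_eq_mul]
      have hpos : 0 < (volume (Metric.closedBall v' r)).toReal :=
        ENNReal.toReal_pos (Metric.measure_closedBall_pos volume v' hr).ne'
          measure_closedBall_lt_top.ne
      rw [mul_left_comm]
      exact mul_le_mul_of_nonneg_left h2 (by positivity)
    -- take limits
    have hlim1 : Filter.Tendsto (fun r : ℝ => ⨍ y in Metric.closedBall v r, f y)
        (nhdsWithin 0 (Set.Ioi 0)) (nhds (f v)) := hv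
    have hlim2 : Filter.Tendsto
        (fun r : ℝ => Real.exp (ℓ ‖u‖) * ⨍ y in Metric.closedBall v' r, f y)
        (nhdsWithin 0 (Set.Ioi 0)) (nhds (Real.exp (ℓ ‖u‖) * f v')) :=
      hv'.const_mul _
    have := le_of_tendsto_of_tendsto hlim1 hlim2
      (by filter_upwards [self_mem_nhdsWithin] with r hr; exact key r hr)
    rw [hnorm]
    exact this
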